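/- Let K ∈ ℝ³ˣ³ be symmetric with tr(K)·I₃ − K positive definite. Then for every R ∈ SO(3), λ_min(tr(K)I₃ − K) · Ψ²(R) ≤ Ψ_K(R) ≤ λ_max(tr(K)I₃ − K) · Ψ²(R), where Ψ_K(R) := (1/2) tr(K(I₃ − R)) and Ψ²(R) := (1/4) tr(I₃ − R). -/

import Mathlib

open Matrix

noncomputable section

/-- SO(3): 3×3 real orthogonal matrices with determinant 1. -/
def SO3 : Set (Matrix (Fin 3) (Fin 3) ℝ) :=
  {R | R.transpose * R = 1 ∧ R.det = 1}

/-- Navigation function Ψ_K(R) = (1/2) tr(K(I₃ − R)). -/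
def PsiK (K R : Matrix (Fin 3) (Fin 3) ℝ) : ℝ :=
  (1 / 2) * (K * (1 - R)).trace

/-- Squared normalized distance Ψ²(R) = (1/4) tr(I₃ − R). -/
def PsiSq (R : Matrix (Fin 3) (Fin 3) ℝ) : ℝ :=
  (1 / 4) * (1 - R).trace

namespace NavAux

def MM (R : Matrix (Fin 3) (Fin 3) ℝ) : Matrix (Fin 3) (Fin 3) ℝ :=
  R + Rᵀ - (R.trace - 1) • 1

def av (R : Matrix (Fin 3) (Fin 3) ℝ) : Fin 3 → ℝ :=
  ![R 2 1 - R 1 2, R 0 2 - R 2 0, R 1 0 - R 0 1]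

lemma adj_eq (R : Matrix (Fin 3) (Fin 3) ℝ) (hR : R ∈ SO3) : R.adjugate = Rᵀ := by
  obtain ⟨h1, h2⟩ := hR
  have h1' : R * Rᵀ = 1 := by rwa [mul_eq_one_comm] at h1
  calc R.adjugate = R.adjugate * (R * Rᵀ) := by rw [h1', mul_one]
    _ = (R.adjugate * R) * Rᵀ := by rw [mul_assoc]
    _ = Rᵀ := by rw [Matrix.adjugate_mul, h2, one_smul, one_mul]

lemma MM_identity (R : Matrix (Fin 3) (Fin 3) ℝ) (hR : R ∈ SO3) :
    (4 : ℝ) • MM R = vecMulVec (av R) (av R) + MM R * MM R := by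
  have hadj := adj_eq R hR
  rw [Matrix.adjugate_fin_three] at hadj
  have had00 : R 0 0 = R 1 1 * R 2 2 - R 1 2 * R 2 1 := by
    have h := congrFun (congrFun hadj 0) 0; simp at h; linear_combination h.symm
  have had01 : R 0 1 = -(R 1 0 * R 2 2) + R 1 2 * R 2 0 := by
    have h := congrFun (congrFun hadj 1) 0; simp at h; linear_combination h.symm
  have had02 : R 0 2 = R 1 0 * R 2 1 - R 1 1 * R 2 0 := by
    have h := congrFun (congrFun hadj 2) 0; simp at h; linear_combination h.symm
  have had10 : R 1 0 = -(R 0 1 * R 2 2) + R 0 2 * R 2 1 := by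
    have h := congrFun (congrFun hadj 0) 1; simp at h; linear_combination h.symm
  have had11 : R 1 1 = R 0 0 * R 2 2 - R 0 2 * R 2 0 := by
    have h := congrFun (congrFun hadj 1) 1; simp at h; linear_combination h.symm
  have had12 : R 1 2 = -(R 0 0 * R 2 1) + R 0 1 * R 2 0 := by
    have h := congrFun (congrFun hadj 2) 1; simp at h; linear_combination h.symm
  have had20 : R 2 0 = R 0 1 * R 1 2 - R 0 2 * R 1 1 := by
    have h := congrFun (congrFun hadj 0) 2; simp at h; linear_combination h.symm
  have had21 : R 2 1 = -(R 0 0 * R 1 2) + R 0 2 * R 1 0 := by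
    have h := congrFun (congrFun hadj 1) 2; simp at h; linear_combination h.symm
  have had22 : R 2 2 = R 0 0 * R 1 1 - R 0 1 * R 1 0 := by
    have h := congrFun (congrFun hadj 2) 2; simp at h; linear_combination h.symm
  have ho : ∀ k l : Fin 3, (Rᵀ * R) k l = (1 : Matrix (Fin 3) (Fin 3) ℝ) k l :=
    fun k l => congrFun (congrFun hR.1 k) l
  have ho00 := ho 0 0; have ho11 := ho 1 1; have ho22 := ho 2 2
  simp only [Matrix.mul_apply, Fin.sum_univ_three, Matrix.transpose_apply, Matrix.one_apply_eq]
    at ho00 ho11 ho22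
  ext i j
  fin_cases i <;> fin_cases j <;>
    simp [MM, av, Matrix.mul_apply, Matrix.one_apply, Fin.sum_univ_three,
      Matrix.trace_fin_three, Matrix.vecMulVec_apply]
  · linear_combination (-1:ℝ)*ho00 - ho11 - ho22 + 2*had00 - 2*had11 - 2*had22
  · linear_combination (2:ℝ)*had01 + 2*had10
  · linear_combination (2:ℝ)*had02 + 2*had20
  · linear_combination (2:ℝ)*had01 + 2*had10
  · linear_combination (-1:ℝ)*ho00 - ho11 - ho22 - 2*had00 + 2*had11 - 2*had22
  · linear_combination (2:ℝ)*had12 + 2*had21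
  · linear_combination (2:ℝ)*had02 + 2*had20
  · linear_combination (2:ℝ)*had12 + 2*had21
  · linear_combination (-1:ℝ)*ho00 - ho11 - ho22 - 2*had00 - 2*had11 + 2*had22

lemma MM_transpose (R : Matrix (Fin 3) (Fin 3) ℝ) : (MM R)ᵀ = MM R := by
  ext i j
  fin_cases i <;> fin_cases j <;>
    simp [MM, Matrix.one_apply] <;> ring

lemma MM_posSemidef (R : Matrix (Fin 3) (Fin 3) ℝ) (hR : R ∈ SO3) : (MM R).PosSemidef := by
  refine Matrix.PosSemidef.of_dotProduct_mulVec_nonneg ?_ ?_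
  · show (MM R)ᴴ = MM R
    rw [show (MM R)ᴴ = (MM R)ᵀ from rfl, MM_transpose]
  · intro x
    have hid := congrArg (fun A => x ⬝ᵥ (A *ᵥ x)) (MM_identity R hR)
    simp only [Matrix.smul_mulVec, dotProduct_smul, Matrix.add_mulVec,
      dotProduct_add, smul_eq_mul] at hid
    have h1 : x ⬝ᵥ (vecMulVec (av R) (av R) *ᵥ x) = (av R ⬝ᵥ x) * (av R ⬝ᵥ x) := by
      simp [dotProduct, Matrix.mulVec, Matrix.vecMulVec_apply, Fin.sum_univ_three]
      ring
    have h2 : x ⬝ᵥ ((MM R * MM R) *ᵥ x) = (MM R *ᵥ x) ⬝ᵥ (MM R *ᵥ x) := by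
      rw [← Matrix.mulVec_mulVec, Matrix.dotProduct_mulVec, ← Matrix.mulVec_transpose,
        MM_transpose]
    have h3 : 0 ≤ (MM R *ᵥ x) ⬝ᵥ (MM R *ᵥ x) :=
      Finset.sum_nonneg fun i _ => mul_self_nonneg _
    have h4 : 0 ≤ (av R ⬝ᵥ x) * (av R ⬝ᵥ x) := mul_self_nonneg _
    have hsx : star x = x := by simp
    rw [hsx]
    nlinarith [hid, h1, h2, h3, h4]

lemma trace_nonneg_of_posSemidef {C : Matrix (Fin 3) (Fin 3) ℝ} (hC : C.PosSemidef) :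
    0 ≤ C.trace := by
  rw [Matrix.trace]
  refine Finset.sum_nonneg fun i _ => ?_
  have h := hC.dotProduct_mulVec_nonneg (Pi.single i 1)
  simpa [Matrix.diag] using h

open scoped MatrixOrder in
lemma trace_mul_nonneg {A B : Matrix (Fin 3) (Fin 3) ℝ} (hA : A.PosSemidef)
    (hB : B.PosSemidef) : 0 ≤ (A * B).trace := by
  have h1 : A = (CFC.sqrt A) * (CFC.sqrt A) := (CFC.sqrt_mul_sqrt_self A hA.nonneg).symm
  have hherm : (CFC.sqrt A)ᴴ = (CFC.sqrt A) := (CFC.sqrt_nonneg A).posSemidef.1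
  have hpsd : ((CFC.sqrt A) * B * (CFC.sqrt A)).PosSemidef := by
    have := hB.conjTranspose_mul_mul_same (CFC.sqrt A)
    rwa [hherm] at this
  have heq : (A * B).trace = ((CFC.sqrt A) * B * (CFC.sqrt A)).trace := by
    have h3 : (A * B).trace = ((CFC.sqrt A) * (CFC.sqrt A) * B).trace :=
      congrArg (fun M => (M * B).trace) h1
    rw [h3, mul_assoc, Matrix.trace_mul_comm]
  rw [heq]
  exact trace_nonneg_of_posSemidef hpsd

lemma key (K R : Matrix (Fin 3) (Fin 3) ℝ) (hKs : K.IsSymm)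
    (hG : (K.trace • (1 : Matrix (Fin 3) (Fin 3) ℝ) - K).PosSemidef) (hR : R ∈ SO3) :
    0 ≤ (K * (1 - R)).trace := by
  have hM := MM_posSemidef R hR
  have h := trace_mul_nonneg hG hM
  have h01 : K 1 0 = K 0 1 := by
    have := congrFun (congrFun hKs 0) 1; simpa using this
  have h02 : K 2 0 = K 0 2 := by
    have := congrFun (congrFun hKs 0) 2; simpa using this
  have h12 : K 2 1 = K 1 2 := by
    have := congrFun (congrFun hKs 1) 2; simpa using this
  have heq : ((K.trace • (1 : Matrix (Fin 3) (Fin 3) ℝ) - K) * MM R).trace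
      = 2 * (K * (1 - R)).trace := by
    simp [MM, Matrix.trace_fin_three, Matrix.mul_apply, Fin.sum_univ_three,
      Matrix.one_apply, Matrix.smul_apply, Matrix.sub_apply, Matrix.add_apply,
      Matrix.transpose_apply, smul_eq_mul]
    linear_combination (R 0 1 - R 1 0) * h01 + (R 0 2 - R 2 0) * h02 + (R 1 2 - R 2 1) * h12
  linarith

lemma sub_iInf_posSemidef {G : Matrix (Fin 3) (Fin 3) ℝ} (hG : G.IsHermitian) :
    (G - (⨅ i, hG.eigenvalues i) • (1 : Matrix (Fin 3) (Fin 3) ℝ)).PosSemidef := by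
  set c := ⨅ i, hG.eigenvalues i with hc
  have spec := hG.spectral_theorem
  set U : Matrix (Fin 3) (Fin 3) ℝ := (hG.eigenvectorUnitary : Matrix (Fin 3) (Fin 3) ℝ)
    with hUdef
  have hUU : U * Uᴴ = 1 := Matrix.mem_unitaryGroup_iff.mp hG.eigenvectorUnitary.2
  have hdiag : Matrix.diagonal (RCLike.ofReal ∘ hG.eigenvalues)
      = Matrix.diagonal hG.eigenvalues := by
    congr 1
  have key : G - c • 1 = U * Matrix.diagonal (fun i => hG.eigenvalues i - c) * Uᴴ := by
    have h1 : Matrix.diagonal (fun i => hG.eigenvalues i - c)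
        = Matrix.diagonal hG.eigenvalues - c • 1 := by
      ext i j
      by_cases hij : i = j <;> simp [Matrix.diagonal, Matrix.one_apply, hij]
    have h2 : U * ((c : ℝ) • (1 : Matrix (Fin 3) (Fin 3) ℝ)) * Uᴴ
        = c • (1 : Matrix (Fin 3) (Fin 3) ℝ) := by
      rw [Matrix.mul_smul, mul_one, Matrix.smul_mul, hUU]
    rw [h1, Matrix.mul_sub, Matrix.sub_mul, h2]
    congr 1
  rw [key]
  exact (Matrix.PosSemidef.diagonal
    (fun i => sub_nonneg.2 (ciInf_le (Set.finite_range _).bddBelow i))).mul_mul_conjTranspose_same U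

lemma iSup_sub_posSemidef {G : Matrix (Fin 3) (Fin 3) ℝ} (hG : G.IsHermitian) :
    ((⨆ i, hG.eigenvalues i) • (1 : Matrix (Fin 3) (Fin 3) ℝ) - G).PosSemidef := by
  set c := ⨆ i, hG.eigenvalues i with hc
  have spec := hG.spectral_theorem
  set U : Matrix (Fin 3) (Fin 3) ℝ := (hG.eigenvectorUnitary : Matrix (Fin 3) (Fin 3) ℝ)
    with hUdef
  have hUU : U * Uᴴ = 1 := Matrix.mem_unitaryGroup_iff.mp hG.eigenvectorUnitary.2
  have hdiag : Matrix.diagonal (RCLike.ofReal ∘ hG.eigenvalues)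
      = Matrix.diagonal hG.eigenvalues := by
    congr 1
  have key : c • 1 - G = U * Matrix.diagonal (fun i => c - hG.eigenvalues i) * Uᴴ := by
    have h1 : Matrix.diagonal (fun i => c - hG.eigenvalues i)
        = c • 1 - Matrix.diagonal hG.eigenvalues := by
      ext i j
      by_cases hij : i = j <;> simp [Matrix.diagonal, Matrix.one_apply, hij]
    have h2 : U * ((c : ℝ) • (1 : Matrix (Fin 3) (Fin 3) ℝ)) * Uᴴ
        = c • (1 : Matrix (Fin 3) (Fin 3) ℝ) := by
      rw [Matrix.mul_smul, mul_one, Matrix.smul_mul, hUU]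
    rw [h1, Matrix.mul_sub, Matrix.sub_mul, h2]
    congr 1
  rw [key]
  exact (Matrix.PosSemidef.diagonal
    (fun i => sub_nonneg.2 (le_ciSup (Set.finite_range _).bddAbove i))).mul_mul_conjTranspose_same U

end NavAux

theorem navigation_function_bounds (K : Matrix (Fin 3) (Fin 3) ℝ)
    (hKsymm : K.IsSymm) (hPD : (K.trace • (1 : Matrix (Fin 3) (Fin 3) ℝ) - K).PosDef)
    (R : Matrix (Fin 3) (Fin 3) ℝ) (hR : R ∈ SO3) :
    (⨅ i, hPD.1.eigenvalues i) * PsiSq R ≤ PsiK K R ∧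
      PsiK K R ≤ (⨆ i, hPD.1.eigenvalues i) * PsiSq R := by
  set lmin := ⨅ i, hPD.1.eigenvalues i with hlmin
  set lmax := ⨆ i, hPD.1.eigenvalues i with hlmax
  have h1 : (K.trace • (1 : Matrix (Fin 3) (Fin 3) ℝ) - K
      - lmin • (1 : Matrix (Fin 3) (Fin 3) ℝ)).PosSemidef := NavAux.sub_iInf_posSemidef hPD.1
  have h2 : (lmax • (1 : Matrix (Fin 3) (Fin 3) ℝ)
      - (K.trace • (1 : Matrix (Fin 3) (Fin 3) ℝ) - K)).PosSemidef :=
    NavAux.iSup_sub_posSemidef hPD.1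
  -- lower bound
  have hK1s : (K - (lmin/2) • (1 : Matrix (Fin 3) (Fin 3) ℝ)).IsSymm := by
    show (K - (lmin/2) • (1 : Matrix (Fin 3) (Fin 3) ℝ))ᵀ = _
    rw [Matrix.transpose_sub, Matrix.transpose_smul, Matrix.transpose_one, hKsymm]
  have htr1 : (K - (lmin/2) • (1 : Matrix (Fin 3) (Fin 3) ℝ)).trace = K.trace - lmin/2*3 := by
    rw [Matrix.trace_sub, Matrix.trace_smul, Matrix.trace_one]
    norm_num [Fintype.card_fin]
    try ring
  have hG1 : ((K - (lmin/2) • (1 : Matrix (Fin 3) (Fin 3) ℝ)).trace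
        • (1 : Matrix (Fin 3) (Fin 3) ℝ) - (K - (lmin/2) • (1 : Matrix (Fin 3) (Fin 3) ℝ)))
      = K.trace • (1 : Matrix (Fin 3) (Fin 3) ℝ) - K - lmin • (1 : Matrix (Fin 3) (Fin 3) ℝ) := by
    rw [htr1]
    ext i j
    by_cases hij : i = j <;>
      simp [hij, Matrix.smul_apply, Matrix.sub_apply, Matrix.one_apply] <;> try ring
  have low0 := NavAux.key _ R hK1s (hG1 ▸ h1) hR
  have e1 : ((K - (lmin/2) • (1 : Matrix (Fin 3) (Fin 3) ℝ)) * (1 - R)).trace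
      = (K * (1 - R)).trace - lmin/2 * (1 - R).trace := by
    rw [Matrix.sub_mul, Matrix.trace_sub, Matrix.smul_mul, Matrix.trace_smul, smul_eq_mul,
      one_mul]
  -- upper bound
  have hK2s : ((lmax/2) • (1 : Matrix (Fin 3) (Fin 3) ℝ) - K).IsSymm := by
    show ((lmax/2) • (1 : Matrix (Fin 3) (Fin 3) ℝ) - K)ᵀ = _
    rw [Matrix.transpose_sub, Matrix.transpose_smul, Matrix.transpose_one, hKsymm]
  have htr2 : ((lmax/2) • (1 : Matrix (Fin 3) (Fin 3) ℝ) - K).trace = lmax/2*3 - K.trace := by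
    rw [Matrix.trace_sub, Matrix.trace_smul, Matrix.trace_one]
    norm_num [Fintype.card_fin]
    try ring
  have hG2 : (((lmax/2) • (1 : Matrix (Fin 3) (Fin 3) ℝ) - K).trace
        • (1 : Matrix (Fin 3) (Fin 3) ℝ) - ((lmax/2) • (1 : Matrix (Fin 3) (Fin 3) ℝ) - K))
      = lmax • (1 : Matrix (Fin 3) (Fin 3) ℝ)
        - (K.trace • (1 : Matrix (Fin 3) (Fin 3) ℝ) - K) := by
    rw [htr2]
    ext i j
    by_cases hij : i = j <;>
      simp [hij, Matrix.smul_apply, Matrix.sub_apply, Matrix.one_apply] <;> try ring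
  have high0 := NavAux.key _ R hK2s (hG2 ▸ h2) hR
  have e2 : (((lmax/2) • (1 : Matrix (Fin 3) (Fin 3) ℝ) - K) * (1 - R)).trace
      = lmax/2 * (1 - R).trace - (K * (1 - R)).trace := by
    rw [Matrix.sub_mul, Matrix.trace_sub, Matrix.smul_mul, Matrix.trace_smul, smul_eq_mul,
      one_mul]
  rw [e1] at low0
  rw [e2] at high0
  unfold PsiK PsiSq
  constructor <;> linarith

end
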